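/- Let σ be a lock-well-formed execution and S a finite set of read/write events of σ, and let T = |Threads(σ)|. Then for every event e of σ, VT(e) ≤ |S| · T, and consequently U(e)(t) ≤ |S| · T for every event e and every thread t ∈ Threads(σ). -/

import Mathlib

open scoped Classical

noncomputable section

/-- An operation: read/write of a memory location, or acquire/release of a lock. -/
inductive Op : Type where
  | read (x : ℕ)
  | write (x : ℕ)
  | acq (l : ℕ)
  | rel (l : ℕ)
  deriving DecidableEq

/-- An execution: a finite sequence of (pairwise-distinct) events, each with a
thread identifier and an operation.  Events are identified with their index
in the sequence, so trace order is the order on `Fin n`. -/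
structure Execution : Type where
  n : ℕ
  thread : Fin n → ℕ
  op : Fin n → Op

/-- `o` is a release operation. -/
def Op.isRel (o : Op) : Prop := ∃ l, o = Op.rel l

/-- `o` is a read or write operation. -/
def Op.isAccess (o : Op) : Prop := ∃ x, o = Op.read x ∨ o = Op.write x

/-- `o` accesses memory location `x`. -/
def Op.accesses (o : Op) (x : ℕ) : Prop := o = Op.read x ∨ o = Op.write x

namespace Execution

/-- Event `e` operates on lock `l`. -/
def touches (σ : Execution) (l : ℕ) (e : Fin σ.n) : Prop :=
  σ.op e = Op.acq l ∨ σ.op e = Op.rel l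

/-- Lock-well-formedness: for every lock `l`, the subsequence of events on `l`
alternates acquires and releases beginning with an acquire (an event on `l` is
an acquire iff an even number of events on `l` precede it), and each release of
`l` is performed by the same thread as the immediately preceding acquire of `l`. -/
def LockWellFormed (σ : Execution) : Prop :=
  ∀ l : ℕ, ∀ e : Fin σ.n, σ.touches l e →
    ((σ.op e = Op.acq l ↔
        Even ((Finset.univ.filter (fun f => f < e ∧ σ.touches l f)).card)) ∧
     (σ.op e = Op.rel l →
        ∃ f : Fin σ.n, f < e ∧ σ.op f = Op.acq l ∧ σ.thread f = σ.thread e ∧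
          ∀ g : Fin σ.n, f < g → g < e → ¬ σ.touches l g))

/-- Nonstrict thread order `e1 ≤tho e2`. -/
def tho (σ : Execution) (e1 e2 : Fin σ.n) : Prop :=
  e1 ≤ e2 ∧ σ.thread e1 = σ.thread e2

/-- Strict thread order `e1 <tho e2`. -/
def sTho (σ : Execution) (e1 e2 : Fin σ.n) : Prop :=
  e1 < e2 ∧ σ.thread e1 = σ.thread e2

/-- One step of happens-before: thread order, or a release–acquire edge. -/
def hbStep (σ : Execution) (e1 e2 : Fin σ.n) : Prop :=
  σ.tho e1 e2 ∨ (e1 < e2 ∧ ∃ l, σ.op e1 = Op.rel l ∧ σ.op e2 = Op.acq l)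

/-- Happens-before: reflexive-transitive closure of thread order together
with release–acquire edges. -/
def hb (σ : Execution) : Fin σ.n → Fin σ.n → Prop :=
  Relation.ReflTransGen σ.hbStep

/-- The (finite) set of threads of the events of `σ`. -/
def threads (σ : Execution) : Finset ℕ :=
  Finset.univ.image σ.thread

/-- Local time `Lft(e)`: 1 plus the number of release events thread-order
before `e`. -/
def Lft (σ : Execution) (e : Fin σ.n) : ℕ :=
  (Finset.univ.filter (fun f => (σ.op f).isRel ∧ σ.sTho f e)).card + 1

/-- FastTrack timestamp `Cft(e)(t)`: max of `Lft(f)` over events `f` of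
thread `t` with `f ≤HB e` (0 if there are none). -/
def Cft (σ : Execution) (e : Fin σ.n) (t : ℕ) : ℕ :=
  (Finset.univ.filter (fun f => σ.thread f = t ∧ σ.hb f e)).sup σ.Lft

/-- `T1 ⊑ T2`: pointwise comparison over the threads of `σ`. -/
def VCle (σ : Execution) (T1 T2 : ℕ → ℕ) : Prop :=
  ∀ t ∈ σ.threads, T1 t ≤ T2 t

/-- `(e1, e2)` is a conflicting pair (with `e1 <tr e2`). -/
def Conflicting (σ : Execution) (e1 e2 : Fin σ.n) : Prop :=
  e1 < e2 ∧ σ.thread e1 ≠ σ.thread e2 ∧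
    ∃ x, (σ.op e1).accesses x ∧ (σ.op e2).accesses x ∧
      (σ.op e1 = Op.write x ∨ σ.op e2 = Op.write x)

/-- `(e1, e2)` is an HB-race. -/
def HBRace (σ : Execution) (e1 e2 : Fin σ.n) : Prop :=
  σ.Conflicting e1 e2 ∧ ¬ σ.hb e1 e2

/-- `RelAfter S`: release events that are the first release after some
sampled event, in the same thread. -/
def RelAfter (σ : Execution) (S : Finset (Fin σ.n)) : Finset (Fin σ.n) :=
  Finset.univ.filter (fun f => (σ.op f).isRel ∧
    ∃ e ∈ S, σ.sTho e f ∧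
      ∀ g : Fin σ.n, (σ.op g).isRel → σ.sTho e g → ¬ σ.sTho g f)

/-- Sampling local time `Lsmp(e)`: 1 plus the number of events of `RelAfter S`
thread-order before `e`. -/
def Lsmp (σ : Execution) (S : Finset (Fin σ.n)) (e : Fin σ.n) : ℕ :=
  ((σ.RelAfter S).filter (fun f => σ.sTho f e)).card + 1

/-- Sampling timestamp `Csmp(e)(t)`: max of `Lsmp(f)` over sampled events `f`
of thread `t` with `f ≤HB e` (0 if there are none). -/
def Csmp (σ : Execution) (S : Finset (Fin σ.n)) (e : Fin σ.n) (t : ℕ) : ℕ :=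
  (S.filter (fun f => σ.thread f = t ∧ σ.hb f e)).sup (σ.Lsmp S)

/-- `Csmp⁻(f)`: the sampling timestamp of the immediate thread-order
predecessor of `f`, or the all-zero timestamp if `f` is the first event of
its thread. -/
def CsmpPrev (σ : Execution) (S : Finset (Fin σ.n)) (f : Fin σ.n) : ℕ → ℕ :=
  if h : ∃ f' : Fin σ.n, σ.sTho f' f ∧ ∀ g : Fin σ.n, σ.sTho f' g → ¬ σ.sTho g f
  then σ.Csmp S h.choose
  else fun _ => 0

/-- `VT(e)`: total number of component updates of the sampling timestamp along
the thread of `e`, up to and including `e`. -/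
def VT (σ : Execution) (S : Finset (Fin σ.n)) (e : Fin σ.n) : ℕ :=
  ∑ f ∈ Finset.univ.filter (fun f => σ.tho f e),
    ((σ.threads).filter (fun t => σ.Csmp S f t ≠ σ.CsmpPrev S f t)).card

/-- Freshness timestamp `U(e)(t)`: max of `VT(f)` over events `f` of thread
`t` with `f ≤HB e` (0 if there are none). -/
def Ufr (σ : Execution) (S : Finset (Fin σ.n)) (e : Fin σ.n) (t : ℕ) : ℕ :=
  (Finset.univ.filter (fun f => σ.thread f = t ∧ σ.hb f e)).sup (σ.VT S)

end Execution

section AuxStmt18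

variable (σ : Execution) (S : Finset (Fin σ.n))

lemma hb_of_sTho' {f g : Fin σ.n} (h : σ.sTho f g) : σ.hb f g :=
  Relation.ReflTransGen.single (Or.inl ⟨le_of_lt h.1, h.2⟩)

lemma csmp_mono' {f g : Fin σ.n} (h : σ.hb f g) (t : ℕ) :
    σ.Csmp S f t ≤ σ.Csmp S g t := by
  apply Finset.sup_mono
  intro a ha
  simp only [Finset.mem_filter] at ha ⊢
  exact ⟨ha.1, ha.2.1, ha.2.2.trans h⟩

lemma csmpPrev_le' (f : Fin σ.n) (t : ℕ) : σ.CsmpPrev S f t ≤ σ.Csmp S f t := by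
  unfold Execution.CsmpPrev
  split
  · next h => exact csmp_mono' σ S (hb_of_sTho' σ h.choose_spec.1) t
  · exact Nat.zero_le _

lemma le_csmpPrev' {f1 f2 : Fin σ.n} (h : σ.sTho f1 f2) (t : ℕ) :
    σ.Csmp S f1 t ≤ σ.CsmpPrev S f2 t := by
  have hex : ∃ f' : Fin σ.n, σ.sTho f' f2 ∧ ∀ g : Fin σ.n, σ.sTho f' g → ¬ σ.sTho g f2 := by
    have hne : (Finset.univ.filter (fun g => σ.sTho g f2)).Nonempty :=
      ⟨f1, by simp [h]⟩
    refine ⟨(Finset.univ.filter (fun g => σ.sTho g f2)).max' hne, ?_, ?_⟩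
    · have := (Finset.univ.filter (fun g => σ.sTho g f2)).max'_mem hne
      simpa using this
    · intro g hg hgf2
      have hmem : g ∈ Finset.univ.filter (fun g => σ.sTho g f2) := by simp [hgf2]
      have := Finset.le_max' _ g hmem
      exact absurd hg.1 (not_lt.mpr this)
  unfold Execution.CsmpPrev
  rw [dif_pos hex]
  have hspec := hex.choose_spec
  have hle : f1 ≤ hex.choose := by
    by_contra hlt
    push_neg at hlt
    exact hspec.2 f1 ⟨hlt, hspec.1.2.trans h.2.symm⟩ h
  exact csmp_mono' σ S
    (Relation.ReflTransGen.single (Or.inl ⟨hle, h.2.trans hspec.1.2.symm⟩)) t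

lemma csmp_attained' {f : Fin σ.n} {t : ℕ}
    (hup : σ.Csmp S f t ≠ σ.CsmpPrev S f t) :
    ∃ s ∈ S, σ.thread s = t ∧ σ.hb s f ∧ σ.Lsmp S s = σ.Csmp S f t := by
  have hpos : 0 < σ.Csmp S f t :=
    lt_of_le_of_lt (Nat.zero_le _) (lt_of_le_of_ne (csmpPrev_le' σ S f t) (Ne.symm hup))
  have hne : (S.filter (fun g => σ.thread g = t ∧ σ.hb g f)).Nonempty := by
    by_contra hemp
    rw [Finset.not_nonempty_iff_eq_empty] at hemp
    have : σ.Csmp S f t = 0 := by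
      unfold Execution.Csmp
      rw [hemp]; rfl
    omega
  obtain ⟨s, hs, hsup⟩ := Finset.exists_mem_eq_sup _ hne (σ.Lsmp S)
  simp only [Finset.mem_filter] at hs
  exact ⟨s, hs.1, hs.2.1, hs.2.2, hsup.symm⟩

lemma vt_bound (T : ℕ) (hT : T = (σ.threads).card) (e : Fin σ.n) :
    σ.VT S e ≤ S.card * T := by
  have h1 : σ.VT S e = ((Finset.univ.filter (fun f => σ.tho f e)).sigma
      (fun f => (σ.threads).filter (fun t => σ.Csmp S f t ≠ σ.CsmpPrev S f t))).card := by
    rw [Finset.card_sigma]; rfl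
  rw [h1, hT, ← Finset.card_product]
  have hmapsto : ∀ p ∈ (Finset.univ.filter (fun f => σ.tho f e)).sigma
      (fun f => (σ.threads).filter (fun t => σ.Csmp S f t ≠ σ.CsmpPrev S f t)),
      ∃ s ∈ S, σ.thread s = p.2 ∧ σ.hb s p.1 ∧ σ.Lsmp S s = σ.Csmp S p.1 p.2 := by
    intro p hp
    rw [Finset.mem_sigma, Finset.mem_filter, Finset.mem_filter] at hp
    exact csmp_attained' σ S hp.2.2
  classical
  set φ : (Σ _ : Fin σ.n, ℕ) → Fin σ.n × ℕ := fun p =>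
    (if h : ∃ s ∈ S, σ.thread s = p.2 ∧ σ.hb s p.1 ∧ σ.Lsmp S s = σ.Csmp S p.1 p.2
     then h.choose else e, p.2) with hφ
  apply Finset.card_le_card_of_injOn φ
  · intro p hp
    obtain h := hmapsto p hp
    rw [Finset.mem_coe, Finset.mem_product]
    rw [Finset.mem_coe, Finset.mem_sigma, Finset.mem_filter, Finset.mem_filter] at hp
    constructor
    · simp only [hφ, dif_pos h]
      exact h.choose_spec.1
    · exact hp.2.1
  · intro p hp q hq heq
    have hp' := Finset.mem_coe.mp hp
    have hq' := Finset.mem_coe.mp hq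
    rw [Finset.mem_sigma, Finset.mem_filter, Finset.mem_filter] at hp' hq'
    obtain hpe := hmapsto p (Finset.mem_coe.mp hp)
    obtain hqe := hmapsto q (Finset.mem_coe.mp hq)
    have ht : p.2 = q.2 := by
      have := congrArg Prod.snd heq
      simpa [hφ] using this
    have hs : hpe.choose = hqe.choose := by
      have := congrArg Prod.fst heq
      simpa [hφ, dif_pos hpe, dif_pos hqe] using this
    have hLp := hpe.choose_spec.2.2.2
    have hLq := hqe.choose_spec.2.2.2
    have hval : σ.Csmp S p.1 p.2 = σ.Csmp S q.1 q.2 := by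
      rw [← hLp, ← hLq, hs]
    have hf : p.1 = q.1 := by
      by_contra hne
      have hthread : σ.thread p.1 = σ.thread q.1 := hp'.1.2.2.trans hq'.1.2.2.symm
      rw [← ht] at hval
      rcases lt_or_gt_of_ne hne with hlt | hgt
      · have h1 : σ.Csmp S p.1 p.2 ≤ σ.CsmpPrev S q.1 p.2 :=
          le_csmpPrev' σ S ⟨hlt, hthread⟩ p.2
        have h2 := hq'.2.2
        rw [← ht] at h2
        have h3 : σ.CsmpPrev S q.1 p.2 < σ.Csmp S q.1 p.2 :=
          lt_of_le_of_ne (csmpPrev_le' σ S q.1 p.2) (Ne.symm h2)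
        omega
      · have h1 : σ.Csmp S q.1 p.2 ≤ σ.CsmpPrev S p.1 p.2 :=
          le_csmpPrev' σ S ⟨hgt, hthread.symm⟩ p.2
        have h3 : σ.CsmpPrev S p.1 p.2 < σ.Csmp S p.1 p.2 :=
          lt_of_le_of_ne (csmpPrev_le' σ S p.1 p.2) (Ne.symm hp'.2.2)
        omega
    exact Sigma.ext hf (heq_of_eq ht)

end AuxStmt18

/-- With `T = |Threads σ|`, every event `e` satisfies
`VT(e) ≤ |S|·T`, and consequently `U(e)(t) ≤ |S|·T` for every event `e` and
every thread `t ∈ Threads σ`. -/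
theorem stmt18 (σ : Execution) (hwf : σ.LockWellFormed)
    (S : Finset (Fin σ.n)) (hS : ∀ e ∈ S, (σ.op e).isAccess)
    (T : ℕ) (hT : T = (σ.threads).card) :
    (∀ e : Fin σ.n, σ.VT S e ≤ S.card * T) ∧
    (∀ e : Fin σ.n, ∀ t ∈ σ.threads, σ.Ufr S e t ≤ S.card * T) := by
  refine ⟨vt_bound σ S T hT, ?_⟩
  intro e t _
  apply Finset.sup_le
  intro f _
  exact vt_bound σ S T hT f
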